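/- There exists a strategy with no consistent run: in the one-player game with action set A = {0,1} and stages indexed by the non-positive integers, the strategy s that plays 0 at a position if all previous actions were 1, and plays 1 otherwise, admits no run consistent with s. -/
import Mathlib


/-- Stages: non-positive integers. -/
abbrev Stage : Type := {n : ℤ // n ≤ 0}

/-- A run assigns an action to each stage. -/
abbrev Run (A : Type) : Type := Stage → A

/-- A position at stage `n` records the actions at all stages `k < n`. -/
abbrev Position (A : Type) (n : ℤ) : Type := {k : ℤ // k < n} → A

/-- The space of all positions. -/
abbrev Pos (A : Type) : Type := Σ n : Stage, Position A n.1

/-- The position induced by a run `r` at stage `n`. -/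
def restrictRun {A : Type} (r : Run A) (n : Stage) : Position A n.1 :=
  fun k => r ⟨k.1, le_trans k.2.le n.2⟩

/- The strategy that plays `0` if all previous actions were `1`, and `1` otherwise. -/
open Classical in
noncomputable def sZero : Pos (Fin 2) → Fin 2 :=
  fun q => if (∀ k, q.2 k = 1) then 0 else 1

/-- the strategy `sZero` admits no consistent run. -/
theorem no_consistent_run :
    ¬ ∃ r : Run (Fin 2), ∀ n : Stage, r n = sZero ⟨n, restrictRun r n⟩ := by
  rintro ⟨r, hr⟩
  -- either all values are 1, or some value is 0
  by_cases hall : ∀ n : Stage, r n = 1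
  · -- then r 0 should be 0
    have h0 := hr ⟨0, le_refl 0⟩
    simp [sZero, restrictRun, hall] at h0
  · push_neg at hall
    obtain ⟨n, hn⟩ := hall
    have hn0 : r n = 0 := by omega
    -- r n = 0 means all previous are 1
    have hprev : ∀ k : {k : ℤ // k < n.1}, restrictRun r n k = 1 := by
      by_contra h
      have := hr n
      simp only [sZero] at this; rw [if_neg h] at this
      rw [hn0] at this
      exact absurd this (by decide)
    -- stage n-1
    have hm : (n.1 - 1 : ℤ) ≤ 0 := by omega
    set m : Stage := ⟨n.1 - 1, hm⟩ with hmdef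
    have hm1 : r m = 1 := hprev ⟨n.1 - 1, by omega⟩
    have := hr m
    simp only [sZero] at this
    by_cases hc : ∀ k : {k : ℤ // k < m.1}, restrictRun r m k = 1
    · rw [if_pos hc] at this
      rw [hm1] at this
      exact absurd this (by decide)
    · push_neg at hc
      obtain ⟨k, hk⟩ := hc
      exact hk (hprev ⟨k.1, by have := k.2; simp only [hmdef] at this; omega⟩)
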